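/- Let H be a quasitriangular Hopf algebra over a commutative ring k with R-matrix R. Then (S ⊗ S)(R) = R, where S is the antipode applied to both tensor factors. -/

import Mathlib

open TensorProduct

variable (k : Type*) [CommRing k] (H : Type*) [Ring H] [HopfAlgebra k H]

/-- `R ⊗ 1` in `H ⊗ H ⊗ H`. -/
noncomputable def leg12 : H ⊗[k] H →ₐ[k] H ⊗[k] (H ⊗[k] H) :=
  Algebra.TensorProduct.map (AlgHom.id k H) Algebra.TensorProduct.includeLeft

/-- `R` with legs in factors 1 and 3. -/
noncomputable def leg13 : H ⊗[k] H →ₐ[k] H ⊗[k] (H ⊗[k] H) :=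
  Algebra.TensorProduct.map (AlgHom.id k H) Algebra.TensorProduct.includeRight

/-- `1 ⊗ R` in `H ⊗ H ⊗ H`. -/
noncomputable def leg23 : H ⊗[k] H →ₐ[k] H ⊗[k] (H ⊗[k] H) :=
  Algebra.TensorProduct.includeRight

/-- `id ⊗ Δ`. -/
noncomputable def idComul : H ⊗[k] H →ₐ[k] H ⊗[k] (H ⊗[k] H) :=
  Algebra.TensorProduct.map (AlgHom.id k H) (Bialgebra.comulAlgHom k H)

/-- `Δ ⊗ id` (landing in `H ⊗ (H ⊗ H)` via the associator). -/
noncomputable def comulId : H ⊗[k] H →ₐ[k] H ⊗[k] (H ⊗[k] H) :=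
  (Algebra.TensorProduct.assoc k k k H H H).toAlgHom.comp
    (Algebra.TensorProduct.map (Bialgebra.comulAlgHom k H) (AlgHom.id k H))

/-- The opposite comultiplication `Δᵒᵖ = τ ∘ Δ`. -/
noncomputable def comulOp : H →ₐ[k] H ⊗[k] H :=
  (Algebra.TensorProduct.comm k H H).toAlgHom.comp (Bialgebra.comulAlgHom k H)

noncomputable def ceH : H →ₐ[k] H := (Algebra.ofId k H).comp (Bialgebra.counitAlgHom k H)

lemma ceH_apply (h : H) : ceH k H h = algebraMap k H (Coalgebra.counit (R := k) h) := rfl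

lemma ce_rTensor_comul (b : H) :
    (Algebra.TensorProduct.map (ceH k H) (AlgHom.id k H)) (Coalgebra.comul (R := k) b)
      = 1 ⊗ₜ[k] b := by
  have repr := Coalgebra.Repr.arbitrary k b
  have h1 := congrArg (LinearMap.rTensor H (Algebra.linearMap k H))
    (Coalgebra.sum_counit_tmul_eq repr)
  simp only [map_sum, LinearMap.rTensor_tmul, Algebra.linearMap_apply, map_one] at h1
  rw [← repr.eq, map_sum]
  simpa [ceH_apply] using h1

lemma ce_lTensor_comul (b : H) :
    (Algebra.TensorProduct.map (AlgHom.id k H) (ceH k H)) (Coalgebra.comul (R := k) b)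
      = b ⊗ₜ[k] 1 := by
  have repr := Coalgebra.Repr.arbitrary k b
  have h1 := congrArg (LinearMap.lTensor H (Algebra.linearMap k H))
    (Coalgebra.sum_tmul_counit_eq repr)
  simp only [map_sum, LinearMap.lTensor_tmul, Algebra.linearMap_apply, map_one] at h1
  rw [← repr.eq, map_sum]
  simpa [ceH_apply] using h1

noncomputable def ELmap : H ⊗[k] H →ₐ[k] H ⊗[k] H :=
  Algebra.TensorProduct.map (AlgHom.id k H) (ceH k H)
noncomputable def ERmap : H ⊗[k] H →ₐ[k] H ⊗[k] H :=
  Algebra.TensorProduct.map (ceH k H) (AlgHom.id k H)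

noncomputable def Fmap : H ⊗[k] (H ⊗[k] H) →ₗ[k] H ⊗[k] H :=
  (LinearMap.mul' k H ∘ₗ (HopfAlgebra.antipode (R := k)).lTensor H).lTensor H

lemma Fmap_tmul (a : H) (w : H ⊗[k] H) :
    Fmap k H (a ⊗ₜ w) =
      a ⊗ₜ (LinearMap.mul' k H ((HopfAlgebra.antipode (R := k)).lTensor H w)) := rfl

lemma F_idComul (x : H ⊗[k] H) : Fmap k H (idComul k H x) = ELmap k H x := by
  induction x using TensorProduct.induction_on with
  | zero => simp
  | tmul a b =>
    simp only [idComul, ELmap, Algebra.TensorProduct.map_tmul, AlgHom.coe_id, id_eq,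
      Bialgebra.comulAlgHom_apply, Fmap_tmul, HopfAlgebra.mul_antipode_lTensor_comul_apply,
      ceH_apply]
  | add x y hx hy => simp [map_add, hx, hy]

lemma F_mul (u v : H ⊗[k] H) :
    Fmap k H (leg12 k H u * leg13 k H v) =
      u * TensorProduct.map LinearMap.id (HopfAlgebra.antipode (R := k)) v := by
  induction u using TensorProduct.induction_on with
  | zero => simp [map_add]
  | add x y hx hy => simp [map_add, add_mul, hx, hy]
  | tmul a b =>
    induction v using TensorProduct.induction_on with
    | zero => simp
    | add x y hx hy => simp [map_add, mul_add, hx, hy]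
    | tmul c d =>
      simp only [leg12, leg13, Algebra.TensorProduct.map_tmul, AlgHom.coe_id, id_eq,
        Algebra.TensorProduct.includeLeft_apply, Algebra.TensorProduct.includeRight_apply,
        Algebra.TensorProduct.tmul_mul_tmul, one_mul, mul_one, Fmap_tmul,
        LinearMap.lTensor_tmul, LinearMap.mul'_apply, TensorProduct.map_tmul,
        LinearMap.id_coe]

noncomputable def Gmap : H ⊗[k] (H ⊗[k] H) →ₗ[k] H ⊗[k] H :=
  ((LinearMap.mul' k H ∘ₗ (HopfAlgebra.antipode (R := k)).rTensor H).rTensor H) ∘ₗ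
    ((TensorProduct.assoc k H H H).symm : H ⊗[k] (H ⊗[k] H) →ₗ[k] (H ⊗[k] H) ⊗[k] H)

lemma Gmap_assoc (w : H ⊗[k] H) (c : H) :
    Gmap k H ((Algebra.TensorProduct.assoc k k k H H H) (w ⊗ₜ c)) =
      (LinearMap.mul' k H ((HopfAlgebra.antipode (R := k)).rTensor H w)) ⊗ₜ c := by
  induction w using TensorProduct.induction_on with
  | zero => simp only [zero_tmul, map_zero]
  | add x y hx hy =>
    simp only [add_tmul, map_add, hx, hy]
  | tmul x y =>
    simp [Gmap, Algebra.TensorProduct.assoc_tmul, TensorProduct.assoc_symm_tmul]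

lemma G_comulId (x : H ⊗[k] H) : Gmap k H (comulId k H x) = ERmap k H x := by
  induction x using TensorProduct.induction_on with
  | zero => simp
  | add x y hx hy => simp [map_add, hx, hy]
  | tmul a b =>
    have : comulId k H (a ⊗ₜ b) =
        (Algebra.TensorProduct.assoc k k k H H H) ((Coalgebra.comul (R := k) a) ⊗ₜ b) := by
      simp [comulId]
    rw [this, Gmap_assoc, HopfAlgebra.mul_antipode_rTensor_comul_apply]
    simp [ERmap, ceH_apply]

lemma G_mul (u v : H ⊗[k] H) :
    Gmap k H (leg13 k H u * leg23 k H v) =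
      (TensorProduct.map (HopfAlgebra.antipode (R := k)) LinearMap.id u) * v := by
  induction u using TensorProduct.induction_on with
  | zero => simp
  | add x y hx hy => simp [map_add, add_mul, hx, hy]
  | tmul a b =>
    induction v using TensorProduct.induction_on with
    | zero => simp
    | add x y hx hy => simp [map_add, mul_add, hx, hy]
    | tmul c d =>
      simp only [leg13, leg23, Algebra.TensorProduct.map_tmul, AlgHom.coe_id, id_eq,
        Algebra.TensorProduct.includeRight_apply, Algebra.TensorProduct.tmul_mul_tmul,
        one_mul, mul_one, TensorProduct.map_tmul, LinearMap.id_coe]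
      simp [Gmap, TensorProduct.assoc_symm_tmul]

noncomputable def Qmap : H ⊗[k] (H ⊗[k] H) →ₐ[k] H ⊗[k] (H ⊗[k] H) :=
  Algebra.TensorProduct.map (AlgHom.id k H)
    (Algebra.TensorProduct.map (ceH k H) (AlgHom.id k H))

lemma Q_idComul (x : H ⊗[k] H) : Qmap k H (idComul k H x) = leg13 k H x := by
  induction x using TensorProduct.induction_on with
  | zero => simp
  | add x y hx hy => simp [map_add, hx, hy]
  | tmul a b =>
    simp only [idComul, Qmap, leg13, Algebra.TensorProduct.map_tmul, AlgHom.coe_id, id_eq,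
      Bialgebra.comulAlgHom_apply, ce_rTensor_comul, Algebra.TensorProduct.includeRight_apply]

lemma Q_leg13 (x : H ⊗[k] H) : Qmap k H (leg13 k H x) = leg13 k H x := by
  induction x using TensorProduct.induction_on with
  | zero => simp
  | add x y hx hy => simp [map_add, hx, hy]
  | tmul a b =>
    simp [Qmap, leg13, Algebra.TensorProduct.map_tmul]

lemma Q_leg12 (x : H ⊗[k] H) : Qmap k H (leg12 k H x) = leg12 k H (ELmap k H x) := by
  induction x using TensorProduct.induction_on with
  | zero => simp
  | add x y hx hy => simp [map_add, hx, hy]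
  | tmul a b =>
    simp [Qmap, leg12, ELmap, Algebra.TensorProduct.map_tmul]

noncomputable def rhoMap : H ⊗[k] (H ⊗[k] H) →ₐ[k] H ⊗[k] H :=
  Algebra.TensorProduct.map (AlgHom.id k H)
    ((Algebra.TensorProduct.rid k k H).toAlgHom.comp
      (Algebra.TensorProduct.map (AlgHom.id k H) (Bialgebra.counitAlgHom k H)))

lemma rho_leg12 (x : H ⊗[k] H) : rhoMap k H (leg12 k H x) = x := by
  induction x using TensorProduct.induction_on with
  | zero => simp
  | add x y hx hy => simp [map_add, hx, hy]
  | tmul a b =>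
    simp [rhoMap, leg12, Algebra.TensorProduct.map_tmul, Algebra.TensorProduct.rid_tmul]

noncomputable def Tmap : H ⊗[k] (H ⊗[k] H) →ₐ[k] H ⊗[k] (H ⊗[k] H) :=
  Algebra.TensorProduct.map (ceH k H) (AlgHom.id k (H ⊗[k] H))

lemma T_assoc (w : H ⊗[k] H) (c : H) :
    Tmap k H ((Algebra.TensorProduct.assoc k k k H H H) (w ⊗ₜ c)) =
      (Algebra.TensorProduct.assoc k k k H H H)
        ((Algebra.TensorProduct.map (ceH k H) (AlgHom.id k H) w) ⊗ₜ c) := by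
  induction w using TensorProduct.induction_on with
  | zero => simp only [zero_tmul, map_zero]
  | add x y hx hy => simp only [add_tmul, map_add, hx, hy]
  | tmul x y =>
    simp [Tmap, Algebra.TensorProduct.assoc_tmul, Algebra.TensorProduct.map_tmul]

lemma T_comulId (x : H ⊗[k] H) : Tmap k H (comulId k H x) = leg23 k H x := by
  induction x using TensorProduct.induction_on with
  | zero => simp
  | add x y hx hy => simp [map_add, hx, hy]
  | tmul a b =>
    have : comulId k H (a ⊗ₜ b) =
        (Algebra.TensorProduct.assoc k k k H H H) ((Coalgebra.comul (R := k) a) ⊗ₜ b) := by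
      simp [comulId]
    rw [this, T_assoc, ce_rTensor_comul]
    simp [leg23, Algebra.TensorProduct.assoc_tmul]

lemma T_leg23 (x : H ⊗[k] H) : Tmap k H (leg23 k H x) = leg23 k H x := by
  simp [Tmap, leg23, Algebra.TensorProduct.map_tmul, ceH_apply]

lemma T_leg13 (x : H ⊗[k] H) : Tmap k H (leg13 k H x) = leg23 k H (ERmap k H x) := by
  induction x using TensorProduct.induction_on with
  | zero => simp
  | add x y hx hy => simp [map_add, hx, hy]
  | tmul a b =>
    simp only [Tmap, leg13, leg23, ERmap, Algebra.TensorProduct.map_tmul, AlgHom.coe_id,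
      id_eq, Algebra.TensorProduct.includeRight_apply, ceH_apply]
    rw [Algebra.algebraMap_eq_smul_one, smul_tmul, smul_tmul']

noncomputable def rho2Map : H ⊗[k] (H ⊗[k] H) →ₐ[k] H ⊗[k] H :=
  (Algebra.TensorProduct.lid k (H ⊗[k] H)).toAlgHom.comp
    (Algebra.TensorProduct.map (Bialgebra.counitAlgHom k H) (AlgHom.id k (H ⊗[k] H)))

lemma rho2_leg23 (x : H ⊗[k] H) : rho2Map k H (leg23 k H x) = x := by
  simp [rho2Map, leg23, Algebra.TensorProduct.map_tmul, Algebra.TensorProduct.lid_tmul]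

/-- `(S ⊗ S)(R) = R`. -/
theorem stmt4
    (R R' : H ⊗[k] H)
    (hinv₁ : R * R' = 1) (hinv₂ : R' * R = 1)
    (hR₁ : idComul k H R = leg13 k H R * leg12 k H R)
    (hR₂ : comulId k H R = leg13 k H R * leg23 k H R)
    (hR₃ : ∀ h : H, comulOp k H h * R = R * Bialgebra.comulAlgHom k H h)
    (Sinv : H →ₗ[k] H)
    (hS₁ : Sinv ∘ₗ HopfAlgebra.antipode (R := k) = LinearMap.id)
    (hS₂ : HopfAlgebra.antipode (R := k) ∘ₗ Sinv = LinearMap.id) :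
    TensorProduct.map (HopfAlgebra.antipode (R := k)) (HopfAlgebra.antipode (R := k)) R = R := by
  have hELR : ELmap k H R = 1 := by
    have h := congrArg (Qmap k H) hR₁
    rw [map_mul, Q_idComul, Q_leg13, Q_leg12] at h
    have h2 : leg13 k H R' * leg13 k H R =
        leg13 k H R' * (leg13 k H R * leg12 k H (ELmap k H R)) := by rw [← h]
    rw [← mul_assoc, ← map_mul, hinv₂, map_one, one_mul] at h2
    have h3 := congrArg (rhoMap k H) h2
    rw [map_one, rho_leg12] at h3
    exact h3.symm
  have hERR : ERmap k H R = 1 := by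
    have h := congrArg (Tmap k H) hR₂
    rw [map_mul, T_comulId, T_leg13, T_leg23] at h
    have h2 : leg23 k H R * leg23 k H R' =
        (leg23 k H (ERmap k H R) * leg23 k H R) * leg23 k H R' := by rw [← h]
    rw [mul_assoc, ← map_mul, hinv₁, map_one, mul_one] at h2
    have h3 := congrArg (rho2Map k H) h2
    rw [map_one, rho2_leg23] at h3
    exact h3.symm
  have hELR' : ELmap k H R' = 1 := by
    have h : ELmap k H R * ELmap k H R' = 1 := by rw [← map_mul, hinv₁, map_one]
    rwa [hELR, one_mul] at h
  have hinvId : idComul k H R' = leg12 k H R' * leg13 k H R' := by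
    have hba : idComul k H R' * idComul k H R = 1 := by rw [← map_mul, hinv₂, map_one]
    have hac : idComul k H R * (leg12 k H R' * leg13 k H R') = 1 := by
      rw [hR₁, mul_assoc, ← mul_assoc (leg12 k H R), ← map_mul, hinv₁, map_one, one_mul,
        ← map_mul, hinv₁, map_one]
    exact left_inv_eq_right_inv hba hac
  have hX : R' * TensorProduct.map LinearMap.id (HopfAlgebra.antipode (R := k)) R' = 1 := by
    have h := congrArg (Fmap k H) hinvId
    rw [F_idComul, F_mul, hELR'] at h
    exact h.symm
  have hXR : TensorProduct.map LinearMap.id (HopfAlgebra.antipode (R := k)) R' = R := by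
    have h : R * (R' * TensorProduct.map LinearMap.id (HopfAlgebra.antipode (R := k)) R')
        = R * 1 := by rw [hX]
    rwa [← mul_assoc, hinv₁, one_mul, mul_one] at h
  have hY : TensorProduct.map (HopfAlgebra.antipode (R := k)) LinearMap.id R * R = 1 := by
    have h := congrArg (Gmap k H) hR₂
    rw [G_comulId, G_mul, hERR] at h
    exact h.symm
  have hYR : TensorProduct.map (HopfAlgebra.antipode (R := k)) LinearMap.id R = R' := by
    have h : (TensorProduct.map (HopfAlgebra.antipode (R := k)) LinearMap.id R * R) * R'
        = 1 * R' := by rw [hY]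
    rwa [mul_assoc, hinv₁, mul_one, one_mul] at h
  have hcomp := congrArg (TensorProduct.map LinearMap.id (HopfAlgebra.antipode (R := k))) hYR
  rw [hXR] at hcomp
  have hmm : TensorProduct.map LinearMap.id (HopfAlgebra.antipode (R := k))
      (TensorProduct.map (HopfAlgebra.antipode (R := k)) LinearMap.id R)
      = TensorProduct.map (HopfAlgebra.antipode (R := k)) (HopfAlgebra.antipode (R := k)) R := by
    rw [← LinearMap.comp_apply, ← TensorProduct.map_comp, LinearMap.id_comp, LinearMap.comp_id]
  rw [← hmm]
  exact hcomp
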